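/- arXiv:2006.15703 — 4 statements merged into one kernel-verified Lean document; each statement's English description precedes it below -/
import Mathlib

section
/- Let φ be a proper partial (Δ+1)-edge-coloring and let C = (e₀,...,e_{ℓ−1}) be a φ-shiftable chain. Then: (i) the unique edge of C uncolored by φ is e₀; (ii) Shift(φ,C) is a proper partial coloring agreeing with φ on all edges outside {e₀,...,e_{ℓ−1}}; (iii) the unique edge of C uncolored by Shift(φ,C) is e_{ℓ−1}. -/
open SimpleGraph

variable {V : Type*} [DecidableEq V]

/-- Two edges (as unordered pairs of vertices) are adjacent: distinct and sharing an endpoint. -/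
def EdgeAdj (e f : Sym2 V) : Prop := e ≠ f ∧ ∃ v, v ∈ e ∧ v ∈ f

/-- A proper partial edge-coloring of `G` with colors `{1,…,Δ+1}` (as `Fin (Δ+1)`):
its domain consists of edges of `G`, and adjacent colored edges get distinct colors. -/
def IsProperPartial (G : SimpleGraph V) (Δ : ℕ)
    (φ : Sym2 V → Option (Fin (Δ + 1))) : Prop :=
  (∀ e, (φ e).isSome → e ∈ G.edgeSet) ∧
  ∀ e f, EdgeAdj e f → (φ e).isSome → φ e ≠ φ f

/-- The set `M(φ,x)` of colors missing at `x`. -/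
def missingColors (G : SimpleGraph V) (Δ : ℕ)
    (φ : Sym2 V → Option (Fin (Δ + 1))) (x : V) : Set (Fin (Δ + 1)) :=
  {c | ∀ y, G.Adj x y → φ s(x, y) ≠ some c}

/-- `Shift φ e₀ e₁`: move the color of `e₁` to `e₀`, uncolor `e₁`, keep all else. -/
def Shift {α : Type*} (φ : Sym2 V → Option α) (e₀ e₁ : Sym2 V) :
    Sym2 V → Option α :=
  fun e => if e = e₀ then φ e₁ else if e = e₁ then none else φ e

/-- `(e₀, e₁)` is a `φ`-shiftable pair. -/
def ShiftablePair (G : SimpleGraph V) (Δ : ℕ) (φ : Sym2 V → Option (Fin (Δ + 1)))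
    (e₀ e₁ : Sym2 V) : Prop :=
  EdgeAdj e₀ e₁ ∧ e₀ ∈ G.edgeSet ∧ φ e₀ = none ∧ (φ e₁).isSome ∧
    IsProperPartial G Δ (Shift φ e₀ e₁)

/-- Shifting a coloring along a chain (list of edges). -/
def ShiftChain {α : Type*} : List (Sym2 V) → (Sym2 V → Option α) → (Sym2 V → Option α)
  | [], φ => φ
  | [_], φ => φ
  | e₀ :: e₁ :: rest, φ => ShiftChain (e₁ :: rest) (Shift φ e₀ e₁)

/-- A chain is `φ`-shiftable: each consecutive pair is shiftable w.r.t. the current coloring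
(for a single-edge chain we require the edge to be an uncolored edge of `G`). -/
def ChainShiftable (G : SimpleGraph V) (Δ : ℕ) :
    List (Sym2 V) → (Sym2 V → Option (Fin (Δ + 1))) → Prop
  | [], _ => True
  | [e], φ => φ e = none ∧ e ∈ G.edgeSet
  | e₀ :: e₁ :: rest, φ =>
      ShiftablePair G Δ φ e₀ e₁ ∧ ChainShiftable G Δ (e₁ :: rest) (Shift φ e₀ e₁)

/-- The spanning subgraph `G(φ, αβ)` of edges colored `α` or `β`. -/
def abSub (G : SimpleGraph V) (Δ : ℕ) (φ : Sym2 V → Option (Fin (Δ + 1)))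
    (α β : Fin (Δ + 1)) : SimpleGraph V where
  Adj x y := G.Adj x y ∧ (φ s(x, y) = some α ∨ φ s(x, y) = some β)
  symm := by
    constructor
    intro x y h
    refine ⟨h.1.symm, ?_⟩
    rw [Sym2.eq_swap]
    exact h.2
  loopless := ⟨fun x h => G.irrefl h.1⟩

/-- A chain is `φ`-happy: it is `φ`-shiftable and its last edge is happy after shifting. -/
def ChainHappy (G : SimpleGraph V) (Δ : ℕ) (C : List (Sym2 V))
    (φ : Sym2 V → Option (Fin (Δ + 1))) : Prop :=
  ChainShiftable G Δ C φ ∧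
    ∃ x y : V, C.getLast? = some s(x, y) ∧
      (missingColors G Δ (ShiftChain C φ) x ∩ missingColors G Δ (ShiftChain C φ) y).Nonempty

/-- for a `φ`-shiftable chain `C`: (i) the unique `φ`-uncolored edge of `C`
is its first edge; (ii) `Shift(φ,C)` is proper and agrees with `φ` off `E(C)`;
(iii) the unique edge of `C` uncolored by `Shift(φ,C)` is its last edge. -/
theorem shiftChain_facts [Fintype V] (G : SimpleGraph V) (Δ : ℕ)
    (φ : Sym2 V → Option (Fin (Δ + 1))) (hφ : IsProperPartial G Δ φ)
    (C : List (Sym2 V)) (hne : C ≠ []) (hchain : C.Chain' EdgeAdj)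
    (hC : ChainShiftable G Δ C φ) :
    (φ (C.head hne) = none ∧ ∀ e ∈ C, φ e = none → e = C.head hne) ∧
    (IsProperPartial G Δ (ShiftChain C φ) ∧ ∀ e ∉ C, ShiftChain C φ e = φ e) ∧
    (ShiftChain C φ (C.getLast hne) = none ∧
      ∀ e ∈ C, ShiftChain C φ e = none → e = C.getLast hne) := by
  induction C generalizing φ with
  | nil => exact absurd rfl hne
  | cons e₀ rest ih =>
    cases rest with
    | nil =>
      obtain ⟨h1, h2⟩ := hC
      exact ⟨⟨h1, by simp⟩, ⟨hφ, fun e _ => rfl⟩, h1, by simp⟩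
    | cons e₁ rest' =>
      obtain ⟨⟨hadj, he0G, h0none, h1some, hprop'⟩, hcs⟩ := hC
      have hne' : (e₁ :: rest') ≠ [] := by simp
      have hne01 : e₀ ≠ e₁ := hadj.1
      obtain ⟨⟨ih1a, ih1b⟩, ⟨ih2a, ih2b⟩, ih3a, ih3b⟩ :=
        ih (Shift φ e₀ e₁) hprop' hne' hchain.tail hcs
      have hlast : (e₀ :: e₁ :: rest').getLast hne = (e₁ :: rest').getLast hne' :=
        List.getLast_cons hne'
      have hshift : ShiftChain (e₀ :: e₁ :: rest') φ
          = ShiftChain (e₁ :: rest') (Shift φ e₀ e₁) := rfl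
      refine ⟨⟨h0none, ?_⟩, ⟨ih2a, ?_⟩, ?_, ?_⟩
      · intro e he heq
        rcases List.mem_cons.1 he with rfl | he
        · rfl
        · by_cases h0 : e = e₀
          · exact h0
          by_cases h1 : e = e₁
          · subst h1; rw [heq] at h1some; simp at h1some
          have : Shift φ e₀ e₁ e = none := by simp [Shift, h0, h1, heq]
          have := ih1b e he this
          simp at this
          exact absurd this h1
      · intro e he
        have h0 : e ≠ e₀ := fun h => he (h ▸ List.mem_cons_self)
        have h1 : e ≠ e₁ := fun h => he (h ▸ (by simp))
        have htail : e ∉ e₁ :: rest' := fun h => he (List.mem_cons_of_mem _ h)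
        rw [hshift, ih2b e htail]
        simp [Shift, h0, h1]
      · rw [hshift, hlast]; exact ih3a
      · intro e he heq
        rw [hlast]
        rcases List.mem_cons.1 he with rfl | he
        · by_cases htail : e ∈ e₁ :: rest'
          · exact ih3b e htail heq
          · rw [hshift, ih2b e htail] at heq
            simp [Shift, hne01] at heq
            rw [heq] at h1some; simp at h1some
        · exact ih3b e he heq
end

section
/- Let φ be a proper partial (Δ+1)-edge-coloring, F a φ-shiftable fan with pivot x and last vertex y that is not φ-happy, and ψ := Shift(φ,F). If F is (φ,αβ)-hopeful (both x and y have degree < 2 in the αβ-colored subgraph of φ), then the edge xy is (ψ,αβ)-hopeful; if moreover F is (φ,αβ)-successful (x and y are in different components of the αβ-colored subgraph of ψ), then xy is (ψ,αβ)-successful. -/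
open SimpleGraph

variable {V : Type*} [DecidableEq V]

/-- The fan with pivot `x` through the vertices of `ys`. -/
def fanList (x : V) (ys : List V) : List (Sym2 V) := ys.map (fun y => s(x, y))

/-- An uncolored edge `xy` is `(φ,αβ)`-hopeful: both endpoints have degree `< 2` in the
`αβ`-colored subgraph. -/
def EdgeHopeful (G : SimpleGraph V) (Δ : ℕ) (φ : Sym2 V → Option (Fin (Δ + 1)))
    (α β : Fin (Δ + 1)) (x y : V) : Prop :=
  φ s(x, y) = none ∧ ((abSub G Δ φ α β).neighborSet x).ncard < 2 ∧
    ((abSub G Δ φ α β).neighborSet y).ncard < 2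

/-- An uncolored edge `xy` is `(φ,αβ)`-successful: hopeful, and `x`, `y` lie in different
components of the `αβ`-colored subgraph. -/
def EdgeSuccessful (G : SimpleGraph V) (Δ : ℕ) (φ : Sym2 V → Option (Fin (Δ + 1)))
    (α β : Fin (Δ + 1)) (x y : V) : Prop :=
  EdgeHopeful G Δ φ α β x y ∧ ¬ (abSub G Δ φ α β).Reachable x y


section AuxLemmas

variable {V : Type*} [DecidableEq V]

lemma Shift_apply_first {α : Type*} (φ : Sym2 V → Option α) (e₀ e₁ : Sym2 V) :
    Shift φ e₀ e₁ e₀ = φ e₁ := if_pos rfl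

lemma Shift_apply_second {α : Type*} (φ : Sym2 V → Option α) {e e₀ e₁ : Sym2 V}
    (h1 : e ≠ e₀) (h2 : e = e₁) : Shift φ e₀ e₁ e = none := by
  unfold Shift
  rw [if_neg h1, if_pos h2]

lemma Shift_apply_other {α : Type*} (φ : Sym2 V → Option α) {e e₀ e₁ : Sym2 V}
    (h1 : e ≠ e₀) (h2 : e ≠ e₁) : Shift φ e₀ e₁ e = φ e := by
  unfold Shift
  rw [if_neg h1, if_neg h2]

lemma shift_missing_pivot (G : SimpleGraph V) (Δ : ℕ)
    (φ : Sym2 V → Option (Fin (Δ + 1))) {x a b : V}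
    (ha : G.Adj x a) (hb : G.Adj x b) (h0 : φ s(x, a) = none) :
    missingColors G Δ (Shift φ s(x, a) s(x, b)) x = missingColors G Δ φ x := by
  ext c
  simp only [missingColors, Set.mem_setOf_eq]
  constructor
  · intro h z hz
    by_cases h1 : s(x, z) = s(x, a)
    · rw [h1, h0]; simp
    by_cases h2 : s(x, z) = s(x, b)
    · have := h a ha
      rw [Shift_apply_first] at this
      rw [h2]; exact this
    · have := h z hz
      rwa [Shift_apply_other φ h1 h2] at this
  · intro h z hz
    by_cases h1 : s(x, z) = s(x, a)
    · have := h b hb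
      rw [h1, Shift_apply_first]
      exact this
    by_cases h2 : s(x, z) = s(x, b)
    · rw [Shift_apply_second φ h1 h2]
      simp
    · rw [Shift_apply_other φ h1 h2]
      exact h z hz

lemma shift_missing_other (G : SimpleGraph V) (Δ : ℕ)
    (φ : Sym2 V → Option (Fin (Δ + 1))) {y : V} {e₀ e₁ : Sym2 V} (hy : y ∉ e₀) :
    missingColors G Δ φ y ⊆ missingColors G Δ (Shift φ e₀ e₁) y := by
  intro c hc z hz
  by_cases h1 : s(y, z) = e₀
  · exact absurd (h1 ▸ Sym2.mem_mk_left y z) hy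
  by_cases h2 : s(y, z) = e₁
  · rw [Shift_apply_second φ h1 h2]
    simp
  · rw [Shift_apply_other φ h1 h2]
    exact hc z hz

lemma chain_proper (G : SimpleGraph V) (Δ : ℕ) :
    ∀ (C : List (Sym2 V)) (φ : Sym2 V → Option (Fin (Δ + 1))),
      ChainShiftable G Δ C φ → IsProperPartial G Δ φ →
      IsProperPartial G Δ (ShiftChain C φ)
  | [], _, _, h => h
  | [_], _, _, h => h
  | _ :: e₁ :: rest, φ, hc, _ =>
      chain_proper G Δ (e₁ :: rest) _ hc.2 hc.1.2.2.2.2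

lemma chain_last_none (G : SimpleGraph V) (Δ : ℕ) :
    ∀ (C : List (Sym2 V)) (φ : Sym2 V → Option (Fin (Δ + 1))) (h : C ≠ []),
      ChainShiftable G Δ C φ → ShiftChain C φ (C.getLast h) = none
  | [_], _, _, hc => hc.1
  | e₀ :: e₁ :: rest, φ, _, hc => by
      have := chain_last_none G Δ (e₁ :: rest) (Shift φ e₀ e₁) (by simp) hc.2
      rwa [List.getLast_cons (by simp)]

lemma deg_lt_two_iff [Fintype V] (G : SimpleGraph V) (Δ : ℕ)
    (φ : Sym2 V → Option (Fin (Δ + 1))) (hφ : IsProperPartial G Δ φ)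
    {α β : Fin (Δ + 1)} (hab : α ≠ β) (v : V) :
    ((abSub G Δ φ α β).neighborSet v).ncard < 2 ↔
      (α ∈ missingColors G Δ φ v ∨ β ∈ missingColors G Δ φ v) := by
  have hmem : ∀ z, z ∈ (abSub G Δ φ α β).neighborSet v ↔
      G.Adj v z ∧ (φ s(v, z) = some α ∨ φ s(v, z) = some β) := fun z => Iff.rfl
  constructor
  · intro h
    by_contra hcon
    push_neg at hcon
    obtain ⟨hα, hβ⟩ := hcon
    simp only [missingColors, Set.mem_setOf_eq, not_forall] at hα hβ
    obtain ⟨z₁, hz₁, hc₁⟩ := hα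
    obtain ⟨z₂, hz₂, hc₂⟩ := hβ
    rw [not_not] at hc₁ hc₂
    have hzz : z₁ ≠ z₂ := by
      intro he; rw [he, hc₂] at hc₁
      exact hab (by simpa using hc₁.symm)
    have : 1 < ((abSub G Δ φ α β).neighborSet v).ncard := by
      rw [Set.one_lt_ncard_iff (Set.toFinite _)]
      exact ⟨z₁, z₂, (hmem z₁).mpr ⟨hz₁, Or.inl hc₁⟩, (hmem z₂).mpr ⟨hz₂, Or.inr hc₂⟩, hzz⟩
    omega
  · intro h
    have hsub : ((abSub G Δ φ α β).neighborSet v).ncard ≤ 1 := by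
      rw [Set.ncard_le_one_iff (Set.toFinite _)]
      intro z₁ z₂ hz₁ hz₂
      rw [hmem] at hz₁ hz₂
      by_contra hne
      have hedge : φ s(v, z₁) ≠ φ s(v, z₂) := by
        apply hφ.2
        · refine ⟨fun he => hne ?_, v, Sym2.mem_mk_left v z₁, Sym2.mem_mk_left v z₂⟩
          exact (Sym2.congr_right.mp he)
        · rcases hz₁.2 with h1 | h1 <;> simp [h1]
      -- from the missing hypothesis, both edges get the same color
      rcases h with hm | hm
      · have c1 : φ s(v, z₁) = some β := by
          rcases hz₁.2 with h1 | h1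
          · exact absurd h1 (hm z₁ hz₁.1)
          · exact h1
        have c2 : φ s(v, z₂) = some β := by
          rcases hz₂.2 with h1 | h1
          · exact absurd h1 (hm z₂ hz₂.1)
          · exact h1
        exact hedge (c1.trans c2.symm)
      · have c1 : φ s(v, z₁) = some α := by
          rcases hz₁.2 with h1 | h1
          · exact h1
          · exact absurd h1 (hm z₁ hz₁.1)
        have c2 : φ s(v, z₂) = some α := by
          rcases hz₂.2 with h1 | h1
          · exact h1
          · exact absurd h1 (hm z₂ hz₂.1)
        exact hedge (c1.trans c2.symm)
    omega

lemma fan_missing_pivot (G : SimpleGraph V) (Δ : ℕ) (x : V) :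
    ∀ (ys : List V) (φ : Sym2 V → Option (Fin (Δ + 1))),
      (∀ v ∈ ys, G.Adj x v) → ChainShiftable G Δ (fanList x ys) φ →
      missingColors G Δ (ShiftChain (fanList x ys) φ) x = missingColors G Δ φ x
  | [], _, _, _ => rfl
  | [_], _, _, _ => rfl
  | a :: b :: rest, φ, hadj, hc => by
      have h1 := shift_missing_pivot G Δ φ (hadj a (by simp)) (hadj b (by simp))
        hc.1.2.2.1
      have h2 := fan_missing_pivot G Δ x (b :: rest) (Shift φ s(x, a) s(x, b))
        (fun v hv => hadj v (by simp [hv])) hc.2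
      exact h2.trans h1

lemma fan_missing_sub (G : SimpleGraph V) (Δ : ℕ) (x y : V) (hyx : y ≠ x) :
    ∀ (ys : List V) (φ : Sym2 V → Option (Fin (Δ + 1))),
      (∀ a ∈ ys.dropLast, y ≠ a) →
      missingColors G Δ φ y ⊆ missingColors G Δ (ShiftChain (fanList x ys) φ) y
  | [], _, _ => le_refl _
  | [_], _, _ => le_refl _
  | a :: b :: rest, φ, h => by
      have h0 : y ∉ s(x, a) := by
        rw [Sym2.mem_iff]
        push_neg
        exact ⟨hyx, h a (by simp)⟩
      exact (shift_missing_other G Δ φ (e₁ := s(x, b)) h0).trans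
        (fan_missing_sub G Δ x y hyx (b :: rest) (Shift φ s(x, a) s(x, b))
          (fun v hv => h v (List.mem_cons_of_mem a hv)))

end AuxLemmas

/-- for a `φ`-shiftable fan `F` with pivot `x` and last vertex `y`, with the
edge `xy` not `φ`-happy and `ψ := Shift(φ,F)`: if `F` is `(φ,αβ)`-hopeful then `xy` is
`(ψ,αβ)`-hopeful, and if moreover `F` is `(φ,αβ)`-successful then `xy` is `(ψ,αβ)`-successful. -/
theorem fan_hopeful_successful [Fintype V] (G : SimpleGraph V) (Δ : ℕ)
    (φ : Sym2 V → Option (Fin (Δ + 1))) (hφ : IsProperPartial G Δ φ)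
    (α β : Fin (Δ + 1)) (hab : α ≠ β) (x : V) (ys : List V) (hne : ys ≠ [])
    (hnd : ys.Nodup) (hadj : ∀ v ∈ ys, G.Adj x v)
    (hshift : ChainShiftable G Δ (fanList x ys) φ)
    (hnothappy : missingColors G Δ φ x ∩ missingColors G Δ φ (ys.getLast hne) = ∅) :
    ((((abSub G Δ φ α β).neighborSet x).ncard < 2 ∧
        ((abSub G Δ φ α β).neighborSet (ys.getLast hne)).ncard < 2) →
      EdgeHopeful G Δ (ShiftChain (fanList x ys) φ) α β x (ys.getLast hne)) ∧
    (((((abSub G Δ φ α β).neighborSet x).ncard < 2 ∧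
        ((abSub G Δ φ α β).neighborSet (ys.getLast hne)).ncard < 2) ∧
      ¬ (abSub G Δ (ShiftChain (fanList x ys) φ) α β).Reachable x (ys.getLast hne)) →
      EdgeSuccessful G Δ (ShiftChain (fanList x ys) φ) α β x (ys.getLast hne)) := by
  have hyy : ys.getLast hne ∈ ys := List.getLast_mem hne
  have hyx : ys.getLast hne ≠ x := (hadj _ hyy).ne'
  have hψproper : IsProperPartial G Δ (ShiftChain (fanList x ys) φ) :=
    chain_proper G Δ _ φ hshift hφ
  have hmx := fan_missing_pivot G Δ x ys φ hadj hshift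
  have hnotin : ys.getLast hne ∉ ys.dropLast := by
    have hsplit : ys.dropLast ++ [ys.getLast hne] = ys := List.dropLast_append_getLast hne
    intro hmem
    have hnd' := hnd
    rw [← hsplit, List.nodup_append] at hnd'
    exact hnd'.2.2 _ hmem _ (by simp) rfl
  have hmy : missingColors G Δ φ (ys.getLast hne) ⊆
      missingColors G Δ (ShiftChain (fanList x ys) φ) (ys.getLast hne) :=
    fan_missing_sub G Δ x _ hyx ys φ (fun a ha he => hnotin (he ▸ ha))
  have hfne : fanList x ys ≠ [] := by simp [fanList, hne]
  have hnone : ShiftChain (fanList x ys) φ s(x, ys.getLast hne) = none := by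
    have h := chain_last_none G Δ (fanList x ys) φ hfne hshift
    simp only [fanList, List.getLast_map] at h
    exact h
  have hhop : (((abSub G Δ φ α β).neighborSet x).ncard < 2 ∧
        ((abSub G Δ φ α β).neighborSet (ys.getLast hne)).ncard < 2) →
      EdgeHopeful G Δ (ShiftChain (fanList x ys) φ) α β x (ys.getLast hne) := by
    rintro ⟨hx, hy2⟩
    refine ⟨hnone, ?_, ?_⟩
    · rw [deg_lt_two_iff G Δ _ hψproper hab, hmx]
      exact (deg_lt_two_iff G Δ φ hφ hab x).mp hx
    · rw [deg_lt_two_iff G Δ _ hψproper hab]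
      rcases (deg_lt_two_iff G Δ φ hφ hab _).mp hy2 with h | h
      · exact Or.inl (hmy h)
      · exact Or.inr (hmy h)
  exact ⟨hhop, fun ⟨hh, hr⟩ => ⟨hhop hh, hr⟩⟩
end

section
/- For every proper partial (Δ+1)-edge-coloring φ of G and every vertex y, the set R⁻(y,φ) has size at most (Δ+1)³. -/
open SimpleGraph

variable {V : Type*} [DecidableEq V]

/-- `R⁺(x,φ,αβ)`: vertices `y` with `y = x`, or `y` adjacent to `x`, or `y` in the same
`αβ`-component as some neighbor `z` of `x` with `deg(z,φ,αβ) < 2`. -/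
def Rout (G : SimpleGraph V) (Δ : ℕ) (φ : Sym2 V → Option (Fin (Δ + 1)))
    (α β : Fin (Δ + 1)) (x : V) : Set V :=
  {y | y = x ∨ G.Adj x y ∨ ∃ z, G.Adj x z ∧
    ((abSub G Δ φ α β).neighborSet z).ncard < 2 ∧ (abSub G Δ φ α β).Reachable z y}

/-- `R⁻(y,φ)`: the union over all pairs of distinct colors `α ≠ β` of
`{x : y ∈ R⁺(x,φ,αβ)}`. -/
def Rin (G : SimpleGraph V) (Δ : ℕ) (φ : Sym2 V → Option (Fin (Δ + 1))) (y : V) :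
    Set V :=
  {x | ∃ α β : Fin (Δ + 1), α ≠ β ∧ y ∈ Rout G Δ φ α β x}

section AuxLemmas

variable {V : Type*} [DecidableEq V]

omit [DecidableEq V] in
lemma aux_unique {H : SimpleGraph V} [Fintype V]
    (hdeg : ∀ v, (H.neighborSet v).ncard ≤ 2) :
    ∀ n {w b z₁ z₂ : V} (p : H.Walk w z₁) (q : H.Walk w z₂), p.length ≤ n →
      H.Adj w b → p.IsPath → q.IsPath → b ∉ p.support → b ∉ q.support →
      (H.neighborSet z₁).ncard ≤ 1 → (H.neighborSet z₂).ncard ≤ 1 → z₁ = z₂ := by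
  intro n
  induction n with
  | zero =>
    intro w b z₁ z₂ p q hlen hwb hp hq hbp hbq h1 h2
    have hwz : w = z₁ := p.eq_of_length_eq_zero (Nat.le_zero.mp hlen)
    subst hwz
    cases q with
    | nil => rfl
    | cons h q' =>
      exfalso
      rename_i u
      have hub : u ≠ b := by
        intro huv; apply hbq; rw [← huv] at *
        simp [SimpleGraph.Walk.support_cons]
      have hsub : {b, u} ⊆ H.neighborSet w := by
        intro t ht
        rcases ht with rfl | ht
        · exact hwb
        · simp at ht; subst ht; exact h
      have := Set.ncard_le_ncard hsub (Set.toFinite _)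
      rw [Set.ncard_pair (Ne.symm hub)] at this
      omega
  | succ n ih =>
    intro w b z₁ z₂ p q hlen hwb hp hq hbp hbq h1 h2
    cases p with
    | nil =>
      cases q with
      | nil => rfl
      | cons h q' =>
        exfalso
        rename_i u
        have hub : u ≠ b := by
          intro huv; apply hbq; rw [← huv] at *
          simp [SimpleGraph.Walk.support_cons]
        have hsub : {b, u} ⊆ H.neighborSet w := by
          intro t ht
          rcases ht with rfl | ht
          · exact hwb
          · simp at ht; subst ht; exact h
        have := Set.ncard_le_ncard hsub (Set.toFinite _)
        rw [Set.ncard_pair (Ne.symm hub)] at this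
        omega
    | cons h p' =>
      rename_i v
      cases q with
      | nil =>
        exfalso
        have hvb : v ≠ b := by
          intro hh; apply hbp; rw [← hh]
          simp [SimpleGraph.Walk.support_cons]
        have hsub : {b, v} ⊆ H.neighborSet w := by
          intro t ht
          rcases ht with rfl | ht
          · exact hwb
          · simp at ht; subst ht; exact h
        have := Set.ncard_le_ncard hsub (Set.toFinite _)
        rw [Set.ncard_pair (Ne.symm hvb)] at this
        omega
      | cons h₂ q' =>
        rename_i u
        have hvb : v ≠ b := by
          intro hh; apply hbp; rw [← hh]
          simp [SimpleGraph.Walk.support_cons]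
        have hub : u ≠ b := by
          intro hh; apply hbq; rw [← hh]
          simp [SimpleGraph.Walk.support_cons]
        have hvu : v = u := by
          by_contra hvu
          have hsub : {b, v, u} ⊆ H.neighborSet w := by
            intro t ht
            rcases ht with rfl | rfl | ht
            · exact hwb
            · exact h
            · simp at ht; subst ht; exact h₂
          have hcard : ({b, v, u} : Set V).ncard = 3 := by
            rw [Set.ncard_insert_of_notMem (by simp [Ne.symm hvb, Ne.symm hub]) (Set.toFinite _),
              Set.ncard_pair hvu]
          have := Set.ncard_le_ncard hsub (Set.toFinite _)
          rw [hcard] at this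
          have := hdeg w
          omega
        subst hvu
        have hp' : p'.IsPath := hp.of_cons
        have hq' : q'.IsPath := hq.of_cons
        have hwp' : w ∉ p'.support := by
          intro hh; exact (SimpleGraph.Walk.cons_isPath_iff h p').mp hp |>.2 hh
        have hwq' : w ∉ q'.support := by
          intro hh; exact (SimpleGraph.Walk.cons_isPath_iff h₂ q').mp hq |>.2 hh
        exact ih p' q'
          (by simp only [SimpleGraph.Walk.length_cons] at hlen; omega)
          h.symm hp' hq' hwp' hwq' h1 h2

omit [DecidableEq V] in
lemma key_two {H : SimpleGraph V} [Fintype V]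
    (hdeg : ∀ v, (H.neighborSet v).ncard ≤ 2) (y : V) :
    {z | H.Reachable z y ∧ (H.neighborSet z).ncard < 2}.ncard ≤ 2 := by
  classical
  have aux := aux_unique hdeg
  set S := {z | H.Reachable z y ∧ (H.neighborSet z).ncard < 2} with hS
  have hfex : ∀ z ∈ S \ {y}, ∃ p : H.Walk y z, p.IsPath := by
    intro z hz
    have hr : H.Reachable y z := hz.1.1.symm
    obtain ⟨q⟩ := hr
    exact ⟨q.toPath, q.toPath.2⟩
  choose pth hpth using hfex
  set f : V → V := fun z => if h : z ∈ S \ {y} then (pth z h).getVert 1 else y with hf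
  have hmaps : Set.MapsTo f (S \ {y}) (H.neighborSet y) := by
    intro z hz
    have hnn : ¬ (pth z hz).Nil := SimpleGraph.Walk.not_nil_of_ne (fun h => hz.2 h.symm)
    have := SimpleGraph.Walk.adj_snd hnn
    simp only [hf, dif_pos hz]
    exact this
  have hinj : Set.InjOn f (S \ {y}) := by
    intro z₁ hz₁ z₂ hz₂ hfe
    simp only [hf, dif_pos hz₁, dif_pos hz₂] at hfe
    have hd₁ : (H.neighborSet z₁).ncard ≤ 1 := Nat.lt_succ_iff.mp hz₁.1.2
    have hd₂ : (H.neighborSet z₂).ncard ≤ 1 := Nat.lt_succ_iff.mp hz₂.1.2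
    have hp₁ := hpth z₁ hz₁
    have hp₂ := hpth z₂ hz₂
    revert hfe hp₁ hd₁
    cases hpq₁ : pth z₁ hz₁ with
    | nil => intro _ _ _; exact ((hz₁.2 : ¬ _ ∈ ({y} : Set V)) rfl).elim
    | cons h₁ q₁ =>
      rename_i w₁
      intro hfe hd₁ hp₁
      revert hfe hp₂ hd₂
      cases hpq₂ : pth z₂ hz₂ with
      | nil => intro _ _ _; exact ((hz₂.2 : ¬ _ ∈ ({y} : Set V)) rfl).elim
      | cons h₂ q₂ =>
        rename_i w₂
        intro hd₂ hp₂ hfe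
        have hfe' : w₁ = w₂ := by simpa using hfe
        subst hfe'
        have hq₁ : q₁.IsPath := hp₁.of_cons
        have hq₂ : q₂.IsPath := hp₂.of_cons
        have hy₁ : y ∉ q₁.support := ((SimpleGraph.Walk.cons_isPath_iff h₁ q₁).mp hp₁).2
        have hy₂ : y ∉ q₂.support := ((SimpleGraph.Walk.cons_isPath_iff h₂ q₂).mp hp₂).2
        exact aux q₁.length q₁ q₂ le_rfl h₁.symm hq₁ hq₂ hy₁ hy₂ hd₁ hd₂
  have hcard : (S \ {y}).ncard ≤ (H.neighborSet y).ncard :=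
    Set.ncard_le_ncard_of_injOn f hmaps hinj (Set.toFinite _)
  by_cases hy : y ∈ S
  · have h1 : (H.neighborSet y).ncard ≤ 1 := Nat.lt_succ_iff.mp hy.2
    have := Set.ncard_diff_singleton_add_one hy (Set.toFinite _)
    omega
  · have : S \ {y} = S := by
      ext z; simp only [Set.mem_diff, Set.mem_singleton_iff, and_iff_left_iff_imp]
      rintro hz rfl; exact hy hz
    rw [this] at hcard
    exact hcard.trans (hdeg y)

lemma abSub_comm (G : SimpleGraph V) (Δ : ℕ) (φ : Sym2 V → Option (Fin (Δ + 1)))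
    (α β : Fin (Δ + 1)) : abSub G Δ φ α β = abSub G Δ φ β α := by
  ext x y; simp only [abSub]; tauto

lemma Rout_comm (G : SimpleGraph V) (Δ : ℕ) (φ : Sym2 V → Option (Fin (Δ + 1)))
    (α β : Fin (Δ + 1)) (x : V) : Rout G Δ φ α β x = Rout G Δ φ β α x := by
  unfold Rout; rw [abSub_comm]

lemma color_subsingleton (G : SimpleGraph V) (Δ : ℕ) {φ : Sym2 V → Option (Fin (Δ + 1))}
    (hφ : IsProperPartial G Δ φ) (v : V) (c : Fin (Δ + 1)) :
    {w | φ s(v, w) = some c}.Subsingleton := by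
  intro w₁ h₁ w₂ h₂
  by_contra hne
  simp only [Set.mem_setOf_eq] at h₁ h₂
  have hadj : EdgeAdj s(v, w₁) s(v, w₂) := by
    refine ⟨?_, v, by simp, by simp⟩
    intro h
    rw [Sym2.eq_iff] at h
    rcases h with ⟨_, h⟩ | ⟨h1, h2⟩
    · exact hne h
    · exact hne (h2.trans h1)
  exact hφ.2 _ _ hadj (by rw [h₁]; rfl) (by rw [h₁, h₂])

lemma abSub_deg_le (G : SimpleGraph V) [Fintype V] (Δ : ℕ)
    {φ : Sym2 V → Option (Fin (Δ + 1))} (hφ : IsProperPartial G Δ φ)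
    (α β : Fin (Δ + 1)) (v : V) :
    ((abSub G Δ φ α β).neighborSet v).ncard ≤ 2 := by
  have hsub : (abSub G Δ φ α β).neighborSet v ⊆
      {w | φ s(v, w) = some α} ∪ {w | φ s(v, w) = some β} := by
    intro w hw
    rcases hw.2 with h | h
    · exact Or.inl h
    · exact Or.inr h
  calc ((abSub G Δ φ α β).neighborSet v).ncard
      ≤ ({w | φ s(v, w) = some α} ∪ {w | φ s(v, w) = some β}).ncard :=
        Set.ncard_le_ncard hsub (Set.toFinite _)
    _ ≤ ({w | φ s(v, w) = some α}).ncard + ({w | φ s(v, w) = some β}).ncard :=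
        Set.ncard_union_le _ _
    _ ≤ 1 + 1 := by
        gcongr
        · exact (Set.ncard_le_one_iff (Set.toFinite _)).mpr
            (fun ha hb => color_subsingleton G Δ hφ v α ha hb)
        · exact (Set.ncard_le_one_iff (Set.toFinite _)).mpr
            (fun ha hb => color_subsingleton G Δ hφ v β ha hb)

omit [DecidableEq V] in
lemma ncard_biUnion_le' {ι : Type*} {α : Type*} [Finite α] (P : Finset ι) (T : ι → Set α) (k : ℕ)
    (h : ∀ i ∈ P, (T i).ncard ≤ k) : (⋃ i ∈ P, T i).ncard ≤ P.card * k := by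
  classical
  induction P using Finset.induction with
  | empty => simp
  | @insert a s ha ih =>
    rw [Finset.set_biUnion_insert]
    calc (T a ∪ ⋃ i ∈ s, T i).ncard ≤ (T a).ncard + (⋃ i ∈ s, T i).ncard :=
          Set.ncard_union_le _ _
      _ ≤ k + s.card * k := by
          gcongr
          · exact h a (Finset.mem_insert_self a s)
          · exact ih fun i hi => h i (Finset.mem_insert_of_mem hi)
      _ = (insert a s).card * k := by rw [Finset.card_insert_of_notMem ha]; ring

end AuxLemmas

/-- for every proper partial `(Δ+1)`-edge-coloring `φ` and every vertex `y`,
`|R⁻(y,φ)| ≤ (Δ+1)³`. -/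
theorem Rin_card_le [Fintype V] (G : SimpleGraph V) [DecidableRel G.Adj] (Δ : ℕ)
    (hΔ : G.maxDegree ≤ Δ) (φ : Sym2 V → Option (Fin (Δ + 1)))
    (hφ : IsProperPartial G Δ φ) (y : V) :
    (Rin G Δ φ y).ncard ≤ (Δ + 1) ^ 3 := by
    classical
  set P : Finset (Fin (Δ + 1) × Fin (Δ + 1)) :=
    Finset.univ.filter (fun p => p.1 < p.2) with hP
  set S : Fin (Δ + 1) × Fin (Δ + 1) → Set V := fun p =>
    {z | (abSub G Δ φ p.1 p.2).Reachable z y ∧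
      ((abSub G Δ φ p.1 p.2).neighborSet z).ncard < 2} with hSdef
  set T : Fin (Δ + 1) × Fin (Δ + 1) → Set V := fun p =>
    ⋃ z ∈ (S p).toFinite.toFinset, G.neighborSet z with hTdef
  set A : Set V := insert y (G.neighborSet y) with hA
  set B : Set V := ⋃ p ∈ P, T p with hB
  have hsub : Rin G Δ φ y ⊆ A ∪ B := by
    rintro x ⟨α, β, hne, hy⟩
    have hwlog : ∃ p : Fin (Δ + 1) × Fin (Δ + 1), p ∈ P ∧ y ∈ Rout G Δ φ p.1 p.2 x := by
      rcases hne.lt_or_gt with h | h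
      · exact ⟨(α, β), by simp [hP, h], hy⟩
      · exact ⟨(β, α), by simp [hP, h], by rw [Rout_comm]; exact hy⟩
    obtain ⟨p, hpP, hyR⟩ := hwlog
    rcases hyR with rfl | hadj | ⟨z, hxz, hzdeg, hzr⟩
    · exact Or.inl (Set.mem_insert _ _)
    · exact Or.inl (Set.mem_insert_of_mem _ hadj.symm)
    · refine Or.inr ?_
      rw [hB]
      refine Set.mem_biUnion hpP ?_
      rw [hTdef]
      exact Set.mem_biUnion ((Set.Finite.mem_toFinset _).mpr ⟨hzr, hzdeg⟩)
        (hxz.symm : x ∈ G.neighborSet z)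
  have hdegV : ∀ v : V, (G.neighborSet v).ncard ≤ Δ := by
    intro v
    have h1 : (G.neighborSet v).ncard = G.degree v := by
      rw [Set.ncard_eq_toFinset_card']; rfl
    rw [h1]
    exact (G.degree_le_maxDegree v).trans hΔ
  have hAcard : A.ncard ≤ 1 + Δ := by
    calc A.ncard ≤ (G.neighborSet y).ncard + 1 := Set.ncard_insert_le _ _
      _ ≤ Δ + 1 := by gcongr; exact hdegV y
      _ = 1 + Δ := by ring
  have hTcard : ∀ p ∈ P, (T p).ncard ≤ 2 * Δ := by
    intro p _
    have hkey : (S p).ncard ≤ 2 :=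
      key_two (abSub_deg_le G Δ hφ p.1 p.2) y
    have hScard : ((S p).toFinite.toFinset).card ≤ 2 := by
      rwa [← Set.ncard_eq_toFinset_card]
    calc (T p).ncard ≤ ((S p).toFinite.toFinset).card * Δ :=
          ncard_biUnion_le' _ _ Δ (fun z _ => hdegV z)
      _ ≤ 2 * Δ := by gcongr
  have hBcard : B.ncard ≤ P.card * (2 * Δ) := ncard_biUnion_le' P T (2 * Δ) hTcard
  have hPcard : 2 * P.card ≤ (Δ + 1) * (Δ + 1) - (Δ + 1) := by
    set P' := P.image Prod.swap with hP'
    have hc : P'.card = P.card := Finset.card_image_of_injective P Prod.swap_injective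
    have hdisj : Disjoint P P' := by
      rw [Finset.disjoint_left]
      intro p hp hp'
      obtain ⟨q, hq, hqp⟩ := Finset.mem_image.mp hp'
      have h1 : p.1 < p.2 := (Finset.mem_filter.mp hp).2
      have h2 : q.1 < q.2 := (Finset.mem_filter.mp hq).2
      rw [← hqp] at h1
      simp only [Prod.fst_swap, Prod.snd_swap] at h1
      exact absurd h1 (not_lt.mpr h2.le)
    have hsub2 : P ∪ P' ⊆ Finset.univ.offDiag := by
      intro p hp
      rcases Finset.mem_union.mp hp with hp | hp
      · exact Finset.mem_offDiag.mpr ⟨Finset.mem_univ _, Finset.mem_univ _,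
          ((Finset.mem_filter.mp hp).2).ne⟩
      · obtain ⟨q, hq, hqp⟩ := Finset.mem_image.mp hp
        have h2 : q.1 < q.2 := (Finset.mem_filter.mp hq).2
        refine Finset.mem_offDiag.mpr ⟨Finset.mem_univ _, Finset.mem_univ _, ?_⟩
        rw [← hqp]
        simp only [Prod.fst_swap, Prod.snd_swap]
        exact h2.ne'
    have := Finset.card_le_card hsub2
    rw [Finset.card_union_of_disjoint hdisj, hc] at this
    have hoff : (Finset.univ : Finset (Fin (Δ + 1))).offDiag.card
        = (Δ + 1) * (Δ + 1) - (Δ + 1) := by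
      rw [Finset.offDiag_card]
      simp
    omega
  have hfinal : (Rin G Δ φ y).ncard ≤ (1 + Δ) + P.card * (2 * Δ) := by
    calc (Rin G Δ φ y).ncard ≤ (A ∪ B).ncard := Set.ncard_le_ncard hsub (Set.toFinite _)
      _ ≤ A.ncard + B.ncard := Set.ncard_union_le _ _
      _ ≤ (1 + Δ) + P.card * (2 * Δ) := by gcongr
  have h2 : P.card * (2 * Δ) ≤ Δ * (Δ + 1) * Δ := by
    have : 2 * P.card ≤ Δ * (Δ + 1) := by
      have : (Δ + 1) * (Δ + 1) - (Δ + 1) = Δ * (Δ + 1) := by ring_nf; omega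
      omega
    calc P.card * (2 * Δ) = (2 * P.card) * Δ := by ring
      _ ≤ (Δ * (Δ + 1)) * Δ := by gcongr
  nlinarith [hfinal, h2, sq_nonneg Δ]
end

section
/- Let φ be a proper partial (Δ+1)-edge-coloring, C a φ-shiftable chain, and ψ := Shift(φ,C). If a vertex x satisfies x ∉ R⁻(C,φ) ∩ R⁻(C,ψ), then R⁺(x,φ) = R⁺(x,ψ). -/
open SimpleGraph

variable {V : Type*} [DecidableEq V]

/-- `R⁺(x,φ)`: the union of `R⁺(x,φ,αβ)` over all pairs of distinct colors. -/
def RoutAll (G : SimpleGraph V) (Δ : ℕ) (φ : Sym2 V → Option (Fin (Δ + 1))) (x : V) :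
    Set V :=
  {y | ∃ α β : Fin (Δ + 1), α ≠ β ∧ y ∈ Rout G Δ φ α β x}

/-- `R⁻(C,φ) = ⋃_{y ∈ V(C)} R⁻(y,φ)` for a chain `C`. -/
def RinChain (G : SimpleGraph V) (Δ : ℕ) (φ : Sym2 V → Option (Fin (Δ + 1)))
    (C : List (Sym2 V)) : Set V :=
  {x | ∃ e ∈ C, ∃ v, v ∈ e ∧ x ∈ Rin G Δ φ v}

lemma shift_ne_aux {α : Type*} (φ : Sym2 V → Option α) (e₀ e₁ e : Sym2 V)
    (h0 : e ≠ e₀) (h1 : e ≠ e₁) : Shift φ e₀ e₁ e = φ e := by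
  simp [Shift, h0, h1]

lemma shiftChain_eq_of_not_mem {α : Type*} :
    ∀ (C : List (Sym2 V)) (φ : Sym2 V → Option α) (e : Sym2 V), e ∉ C →
      ShiftChain C φ e = φ e
  | [], _, _, _ => rfl
  | [_], _, _, _ => rfl
  | e₀ :: e₁ :: rest, φ, e, he => by
      simp only [List.mem_cons, not_or] at he
      rw [ShiftChain, shiftChain_eq_of_not_mem (e₁ :: rest) _ e
        (by simp only [List.mem_cons, not_or]; exact ⟨he.2.1, he.2.2⟩)]
      exact shift_ne_aux φ e₀ e₁ e he.1 he.2.1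

lemma abSub_adj_iff (G : SimpleGraph V) (Δ : ℕ)
    (φ : Sym2 V → Option (Fin (Δ + 1))) (α β : Fin (Δ + 1)) (a b : V) :
    (abSub G Δ φ α β).Adj a b ↔
      G.Adj a b ∧ (φ s(a, b) = some α ∨ φ s(a, b) = some β) := Iff.rfl

lemma routAll_eq_of_agree (G : SimpleGraph V) (Δ : ℕ)
    (φ ψ : Sym2 V → Option (Fin (Δ + 1))) (C : List (Sym2 V))
    (hagree : ∀ e, e ∉ C → φ e = ψ e) (x : V) (hx : x ∉ RinChain G Δ φ C) :
    RoutAll G Δ φ x = RoutAll G Δ ψ x := by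
  have hmem : ∀ e ∈ C, ∀ v, v ∈ e → ∀ α β : Fin (Δ + 1), α ≠ β →
      v ∉ Rout G Δ φ α β x := by
    intro e he v hv α β hab hout
    exact hx ⟨e, he, v, hv, α, β, hab, hout⟩
  have main : ∀ α β : Fin (Δ + 1), α ≠ β →
      Rout G Δ φ α β x = Rout G Δ ψ α β x := by
    intro α β hab
    -- facts about neighbors z of x
    have hzC : ∀ z, G.Adj x z → ∀ e ∈ C, z ∉ e := by
      intro z hzx e he hz
      exact hmem e he z hz α β hab (Or.inr (Or.inl hzx))
    have hnbr : ∀ z, G.Adj x z →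
        (abSub G Δ φ α β).neighborSet z = (abSub G Δ ψ α β).neighborSet z := by
      intro z hzx
      ext w
      have hzw : s(z, w) ∉ C := fun hC' => hzC z hzx _ hC' (Sym2.mem_mk_left z w)
      simp only [SimpleGraph.mem_neighborSet, abSub_adj_iff, hagree _ hzw]
    have key : ∀ z, G.Adj x z →
        ((abSub G Δ φ α β).neighborSet z).ncard < 2 → ∀ y,
        ((abSub G Δ φ α β).Reachable z y ↔ (abSub G Δ ψ α β).Reachable z y) := by
      intro z hzx hdeg y
      have hcomp : ∀ v, (abSub G Δ φ α β).Reachable z v → ∀ e ∈ C, v ∉ e := by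
        intro v hr e he hv
        exact hmem e he v hv α β hab (Or.inr (Or.inr ⟨z, hzx, hdeg, hr⟩))
      have hedge : ∀ a b : V, (abSub G Δ φ α β).Reachable z a →
          φ s(a, b) = ψ s(a, b) := by
        intro a b hr
        exact hagree _ (fun hC' => hcomp a hr _ hC' (Sym2.mem_mk_left a b))
      constructor
      · intro hr
        obtain ⟨w⟩ := hr
        have claimF : ∀ (a y : V), (abSub G Δ φ α β).Walk a y →
            (abSub G Δ φ α β).Reachable z a → (abSub G Δ ψ α β).Reachable z a →
            (abSub G Δ ψ α β).Reachable z y := by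
          intro a y w
          induction w with
          | nil => exact fun _ h => h
          | @cons u v w h p ih =>
            intro h1 h2
            have hadj : (abSub G Δ ψ α β).Adj u v := by
              rw [abSub_adj_iff] at h ⊢
              exact ⟨h.1, (hedge u v h1) ▸ h.2⟩
            exact ih (h1.trans h.reachable) (h2.trans hadj.reachable)
        exact claimF z y w (SimpleGraph.Reachable.refl z) (SimpleGraph.Reachable.refl z)
      · intro hr
        obtain ⟨w⟩ := hr
        have claimB : ∀ (a y : V), (abSub G Δ ψ α β).Walk a y →
            (abSub G Δ φ α β).Reachable z a → (abSub G Δ φ α β).Reachable z y := by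
          intro a y w
          induction w with
          | nil => exact fun h => h
          | @cons u v w h p ih =>
            intro h1
            have hadj : (abSub G Δ φ α β).Adj u v := by
              rw [abSub_adj_iff] at h ⊢
              exact ⟨h.1, (hedge u v h1).symm ▸ h.2⟩
            exact ih (h1.trans hadj.reachable)
        exact claimB z y w (SimpleGraph.Reachable.refl z)
    ext y
    simp only [Rout, Set.mem_setOf_eq]
    constructor
    · rintro (h | h | ⟨z, hzx, hdeg, hr⟩)
      · exact Or.inl h
      · exact Or.inr (Or.inl h)
      · exact Or.inr (Or.inr ⟨z, hzx, (hnbr z hzx) ▸ hdeg, (key z hzx hdeg y).1 hr⟩)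
    · rintro (h | h | ⟨z, hzx, hdeg, hr⟩)
      · exact Or.inl h
      · exact Or.inr (Or.inl h)
      · have hdegφ : ((abSub G Δ φ α β).neighborSet z).ncard < 2 := by
          rw [hnbr z hzx]; exact hdeg
        exact Or.inr (Or.inr ⟨z, hzx, hdegφ, (key z hzx hdegφ y).2 hr⟩)
  ext y
  constructor <;> rintro ⟨α, β, hab, hy⟩
  · exact ⟨α, β, hab, (main α β hab) ▸ hy⟩
  · exact ⟨α, β, hab, (main α β hab).symm ▸ hy⟩

/-- if `C` is a `φ`-shiftable chain, `ψ := Shift(φ,C)`, and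
`x ∉ R⁻(C,φ) ∩ R⁻(C,ψ)`, then `R⁺(x,φ) = R⁺(x,ψ)`. -/
theorem Rout_unchanged [Fintype V] (G : SimpleGraph V) (Δ : ℕ)
    (φ : Sym2 V → Option (Fin (Δ + 1))) (hφ : IsProperPartial G Δ φ)
    (C : List (Sym2 V)) (hchain : C.Chain' EdgeAdj) (hC : ChainShiftable G Δ C φ)
    (x : V)
    (hx : x ∉ RinChain G Δ φ C ∩ RinChain G Δ (ShiftChain C φ) C) :
    RoutAll G Δ φ x = RoutAll G Δ (ShiftChain C φ) x := by
  have hagree : ∀ e, e ∉ C → φ e = ShiftChain C φ e :=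
    fun e he => (shiftChain_eq_of_not_mem C φ e he).symm
  by_cases h1 : x ∈ RinChain G Δ φ C
  · have h2 : x ∉ RinChain G Δ (ShiftChain C φ) C := fun h => hx ⟨h1, h⟩
    exact (routAll_eq_of_agree G Δ (ShiftChain C φ) φ C
      (fun e he => (hagree e he).symm) x h2).symm
  · exact routAll_eq_of_agree G Δ φ (ShiftChain C φ) C hagree x h1
end
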